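/- For the complete graph K_n with n ≥ 4 even and all susceptances equal to 1, the family of points defined by x₁ = −1, y₁ = 0, x_{k+1} = −x_k and y_{k+1} = −y_k for all even k ≥ 2, with (x_m, y_m) on the unit circle chosen freely for odd m ≥ 3, gives infinitely many real solutions of the lossless zero-injection power flow equations. -/

import Mathlib

lemma pair_sum_zero {f : ℕ → ℝ} (t : ℕ) (h : ∀ i < t, f (2*i) + f (2*i+1) = 0) :
    ∑ m ∈ Finset.range (2*t), f m = 0 := by
  induction t with
  | zero => simp
  | succ t ih =>
    have he : 2*(t+1) = (2*t)+1+1 := by ring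
    rw [he, Finset.sum_range_succ, Finset.sum_range_succ,
      ih (fun i hi => h i (by omega))]
    have h2 := h t (Nat.lt_succ_self t)
    linarith

lemma sum_diff_eq {n : ℕ} (x y : ℕ → ℝ) (k : ℕ)
    (hx : ∑ m ∈ Finset.range n, x m = 0) (hy : ∑ m ∈ Finset.range n, y m = 0) :
    ∑ m ∈ Finset.range n, (x k * y m - x m * y k) = 0 := by
  rw [Finset.sum_sub_distrib, ← Finset.mul_sum, ← Finset.sum_mul, hx, hy]
  ring

noncomputable def Xf (t : ℝ) (m : ℕ) : ℝ :=
  if m = 2 then (1 - t^2)/(1 + t^2) else if m = 3 then -((1 - t^2)/(1 + t^2))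
  else if Even m then 1 else -1

noncomputable def Yf (t : ℝ) (m : ℕ) : ℝ :=
  if m = 2 then 2*t/(1 + t^2) else if m = 3 then -(2*t/(1 + t^2)) else 0

lemma denne (t : ℝ) : (1 : ℝ) + t^2 ≠ 0 := by positivity

lemma Xf_pair (t : ℝ) (i : ℕ) : Xf t (2*i) + Xf t (2*i+1) = 0 := by
  unfold Xf
  rcases i with _ | _ | i
  · norm_num
  · norm_num
  · have h1 : 2*(i+2) ≠ 2 := by omega
    have h2 : 2*(i+2) ≠ 3 := by omega
    have h3 : 2*(i+2)+1 ≠ 2 := by omega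
    have h4 : 2*(i+2)+1 ≠ 3 := by omega
    have h5 : Even (2*(i+2)) := even_two_mul _
    have h6 : ¬ Even (2*(i+2)+1) := by simp [Nat.even_add_one, h5]
    simp [h1, h2, h3, h4, h5, h6]

lemma Yf_pair (t : ℝ) (i : ℕ) : Yf t (2*i) + Yf t (2*i+1) = 0 := by
  unfold Yf
  rcases i with _ | _ | i
  · norm_num
  · norm_num
  · have h1 : 2*(i+2) ≠ 2 := by omega
    have h2 : 2*(i+2) ≠ 3 := by omega
    have h3 : 2*(i+2)+1 ≠ 2 := by omega
    have h4 : 2*(i+2)+1 ≠ 3 := by omega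
    simp [h1, h2, h3, h4]

theorem stmt_11 (n : ℕ) (hn : 4 ≤ n) (heven : Even n)
    (x y : ℕ → ℝ) (hx0 : x 0 = 1) (hy0 : y 0 = 0)
    (hx1 : x 1 = -1) (hy1 : y 1 = 0)
    (hpair : ∀ k, Even k → 2 ≤ k → k + 1 ≤ n - 1 →
      x (k + 1) = -x k ∧ y (k + 1) = -y k)
    (hcirc : ∀ m, m ≤ n - 1 → x m ^ 2 + y m ^ 2 = 1) :
    (∀ k, 1 ≤ k → k ≤ n - 1 →
      x k ^ 2 + y k ^ 2 = 1 ∧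
      ∑ m ∈ Finset.range n, (x k * y m - x m * y k) = 0)
    ∧ {p : (Fin n → ℝ) × (Fin n → ℝ) |
        ∃ x' y' : ℕ → ℝ,
          (∀ i : Fin n, p.1 i = x' i ∧ p.2 i = y' i) ∧
          x' 0 = 1 ∧ y' 0 = 0 ∧ x' 1 = -1 ∧ y' 1 = 0 ∧
          (∀ k, Even k → 2 ≤ k → k + 1 ≤ n - 1 →
            x' (k + 1) = -x' k ∧ y' (k + 1) = -y' k) ∧
          (∀ m, m ≤ n - 1 → x' m ^ 2 + y' m ^ 2 = 1) ∧
          (∀ k, 1 ≤ k → k ≤ n - 1 →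
            ∑ m ∈ Finset.range n, (x' k * y' m - x' m * y' k) = 0)}.Infinite := by
  obtain ⟨T, hT⟩ := heven
  have hn2 : n = 2 * T := by omega
  have hT2 : 2 ≤ T := by omega
  subst hn2
  constructor
  · intro k hk1 hk2
    refine ⟨hcirc k (by omega), ?_⟩
    apply sum_diff_eq
    · apply pair_sum_zero
      intro i hi
      rcases Nat.eq_zero_or_pos i with h0 | h0
      · subst h0; simp [hx0, hx1]
      · have := (hpair (2*i) (even_two_mul i) (by omega) (by omega)).1
        linarith
    · apply pair_sum_zero
      intro i hi
      rcases Nat.eq_zero_or_pos i with h0 | h0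
      · subst h0; simp [hy0, hy1]
      · have := (hpair (2*i) (even_two_mul i) (by omega) (by omega)).2
        linarith
  · apply Set.infinite_of_injective_forall_mem
      (f := fun t : ℝ => ((fun i : Fin (2*T) => Xf t i), (fun i : Fin (2*T) => Yf t i)))
    · intro a b hab
      have h1 : Xf a 2 = Xf b 2 := by
        have := congrFun (congrArg Prod.fst hab) ⟨2, by omega⟩
        simpa using this
      have h2 : Yf a 2 = Yf b 2 := by
        have := congrFun (congrArg Prod.snd hab) ⟨2, by omega⟩
        simpa using this
      simp only [Xf, Yf, if_pos rfl, ite_true] at h1 h2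
      have ha := denne a
      have hb := denne b
      have e1 : (1 - a^2) * (1 + b^2) = (1 - b^2) * (1 + a^2) := by
        field_simp at h1; linarith
      have e2 : 2*a * (1 + b^2) = 2*b * (1 + a^2) := by
        field_simp at h2; linarith
      have key : (a - b) * (1 - a*b) = 0 := by linear_combination e2/2
      rcases mul_eq_zero.mp key with h | h
      · linarith
      · have hsq : a^2 = b^2 := by nlinarith [e1]
        have : (a + b) * (a - b) = 0 := by nlinarith
        rcases mul_eq_zero.mp this with h' | h'
        · exfalso
          have hab1 : a * b = 1 := by linarith
          nlinarith [sq_nonneg b]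
        · linarith
    · intro t
      refine ⟨Xf t, Yf t, fun i => ⟨rfl, rfl⟩, by norm_num [Xf], by norm_num [Yf],
        by norm_num [Xf], by norm_num [Yf], ?_, ?_, ?_⟩
      · intro k hke hk2 hk1
        by_cases hk : k = 2
        · subst hk; norm_num [Xf, Yf]
        · have h4 : 4 ≤ k := by
            rcases hke with ⟨c, hc⟩; omega
          have h1 : k ≠ 2 := by omega
          have h2 : k ≠ 3 := by omega
          have h3 : k + 1 ≠ 2 := by omega
          have h5 : k + 1 ≠ 3 := by omega
          have h6 : ¬ Even (k+1) := by simp [Nat.even_add_one]; exact hke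
          simp [Xf, Yf, h1, h2, h3, h5, h6, hke]
      · intro m hm
        have ht := denne t
        by_cases h2 : m = 2
        · subst h2
          simp only [Xf, Yf, if_pos rfl, ite_true]
          field_simp
          ring
        · by_cases h3 : m = 3
          · subst h3
            norm_num [Xf, Yf]
            field_simp
            ring
          · rcases Nat.even_or_odd m with he | ho
            · simp [Xf, Yf, h2, h3, he]
            · simp [Xf, Yf, h2, h3, Nat.not_even_iff_odd.mpr ho]
      · intro k hk1 hk2
        apply sum_diff_eq
        · exact pair_sum_zero T (fun i _ => Xf_pair t i)
        · exact pair_sum_zero T (fun i _ => Yf_pair t i)
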